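/- For positive integers m and variables x, define S_k(x) = E_k(1, x, x^2, …, x^{m−1}), the k-th elementary symmetric polynomial evaluated at the geometric progression 1, x, …, x^{m−1}. Then the greatest common divisor of S_1(x), S_2(x), …, S_{m−1}(x) in ℚ[x] is the m-th cyclotomic polynomial Φ_m(x). -/

import Mathlib

open Polynomial

theorem esymm_map_hom {R S : Type*} [CommSemiring R] [CommSemiring S] (f : R →+* S)
    (s : Multiset R) (k : ℕ) : (s.map f).esymm k = f (s.esymm k) := by
  rw [Multiset.esymm, Multiset.esymm, map_multiset_sum, Multiset.powersetCard_map,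
    Multiset.map_map, Multiset.map_map]
  exact congrArg Multiset.sum (Multiset.map_congr rfl fun t _ => (map_multiset_prod f t).symm)

theorem prod_base {d : ℕ} (hd : 0 < d) {ξ : ℂ} (hξ : IsPrimitiveRoot ξ d) :
    ((Multiset.range d).map fun i => (X : ℂ[X]) - C (ξ ^ i)).prod = X ^ d - 1 := by
  have h1 : (Multiset.range d).map (fun i => ξ ^ i) = nthRoots d (1 : ℂ) := by
    rw [hξ.nthRoots_eq (one_pow d)]
    exact (Multiset.map_congr rfl fun i _ => by rw [mul_one]).symm
  have h2 : ((Multiset.range d).map fun i => (X : ℂ[X]) - C (ξ ^ i)) =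
      (nthRoots d (1 : ℂ)).map (fun z => X - C z) := by
    rw [← h1, Multiset.map_map]; rfl
  have hmo : (X ^ d - C (1 : ℂ)).Monic := monic_X_pow_sub_C _ hd.ne'
  have hcard : Multiset.card (X ^ d - C (1 : ℂ)).roots = (X ^ d - C (1 : ℂ)).natDegree := by
    rw [← nthRoots, hξ.card_nthRoots_one, natDegree_X_pow_sub_C]
  have := prod_multiset_X_sub_C_of_monic_of_roots_card_eq hmo hcard
  rw [h2, ← nthRoots] at *
  simpa [map_one] using this

theorem prod_periodic {d : ℕ} (hd : 0 < d) {ξ : ℂ} (hξ : IsPrimitiveRoot ξ d) (r : ℕ) :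
    ((Multiset.range (d * r)).map fun i => (X : ℂ[X]) - C (ξ ^ i)).prod =
      ((X : ℂ[X]) ^ d - 1) ^ r := by
  induction r with
  | zero => simp
  | succ r ih =>
    rw [Nat.mul_succ, Multiset.range_add, Multiset.map_add, Multiset.prod_add, ih,
      Multiset.map_map, pow_succ]
    congr 1
    rw [← prod_base hd hξ]
    refine congrArg Multiset.prod (Multiset.map_congr rfl fun i _ => ?_)
    simp only [Function.comp_apply, pow_add, pow_mul, hξ.pow_eq_one, one_pow, one_mul]

theorem coeff_lemma {d r : ℕ} (hd : 0 < d) (hr : 1 ≤ r) :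
    (((X : ℂ[X]) ^ d - 1) ^ r).coeff (d * r - d) = -(r : ℂ) := by
  have h1 : ((X : ℂ[X]) ^ d - 1) ^ r = expand ℂ d ((X - 1) ^ r) := by
    rw [map_pow, map_sub, expand_X, map_one]
  have h2 : d * r - d = d * (r - 1) := by
    cases r with
    | zero => omega
    | succ r => simp [Nat.mul_succ]
  have h3 : (X - 1 : ℂ[X]) = X + C (-1) := by
    rw [map_neg, C_1, sub_eq_add_neg]
  rw [h1, h2, coeff_expand hd, if_pos (Dvd.intro _ rfl), Nat.mul_div_cancel_left _ hd,
    h3, coeff_X_add_C_pow]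
  have h4 : r - (r - 1) = 1 := by omega
  have h5 : r.choose (r - 1) = r := by
    have := Nat.choose_symm (by omega : 1 ≤ r)
    rw [this, Nat.choose_one_right]
  rw [h4, h5, pow_one]
  ring

theorem key_eval {d r n k : ℕ} (hd : 0 < d) (hn : n = d * r) {ξ : ℂ}
    (hξ : IsPrimitiveRoot ξ d) (hk : k ≤ n) :
    (((X : ℂ[X]) ^ d - 1) ^ r).coeff (n - k) =
      (-1 : ℂ) ^ k * aeval ξ (((Multiset.range n).map fun i => (X : ℚ[X]) ^ i).esymm k) := by
  have h1 : aeval ξ (((Multiset.range n).map fun i => (X : ℚ[X]) ^ i).esymm k)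
      = ((Multiset.range n).map fun i => ξ ^ i).esymm k := by
    have he := esymm_map_hom ((aeval ξ : ℚ[X] →ₐ[ℚ] ℂ) : ℚ[X] →+* ℂ)
      ((Multiset.range n).map fun i => (X : ℚ[X]) ^ i) k
    simp only [RingHom.coe_coe] at he
    rw [← he, Multiset.map_map]
    refine congrArg (fun s => Multiset.esymm s k) (Multiset.map_congr rfl fun i _ => ?_)
    simp
  set t : Multiset ℂ := (Multiset.range n).map fun i => ξ ^ i with ht
  have hcard : Multiset.card t = n := by simp [ht]
  have hsub : n - k ≤ Multiset.card t := by omega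
  have hv := Multiset.prod_X_sub_C_coeff t hsub
  rw [hcard, Nat.sub_sub_self hk] at hv
  have hprod : (t.map fun z => (X : ℂ[X]) - C z).prod = ((X : ℂ[X]) ^ d - 1) ^ r := by
    rw [ht, Multiset.map_map, hn]
    exact prod_periodic hd hξ r
  rw [← hprod, hv, h1]

/-- The gcd (in `ℚ[X]`) of the polynomials `S_k(x) = E_k(1, x, …, x^{m-1})`,
for `k = 1, …, m-1`, is the `m`-th cyclotomic polynomial. -/
theorem gcd_esymm_geometric_eq_cyclotomic (m : ℕ) (hm : 2 ≤ m) :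
    (Finset.Icc 1 (m - 1)).gcd
      (fun k => (((Multiset.range m).map fun i => (X : ℚ[X]) ^ i).esymm k)) =
      cyclotomic m ℚ := by
  have hm0 : 0 < m := by omega
  set S : ℕ → ℚ[X] := fun k => ((Multiset.range m).map fun i => (X : ℚ[X]) ^ i).esymm k with hS
  set g : ℚ[X] := (Finset.Icc 1 (m - 1)).gcd S with hg
  have hζ := Complex.isPrimitiveRoot_exp m (by omega)
  -- `Φ_m ∣ S k` for all k in range
  have hΦS : ∀ k ∈ Finset.Icc 1 (m - 1), cyclotomic m ℚ ∣ S k := by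
    intro k hk
    rw [Finset.mem_Icc] at hk
    rw [cyclotomic_eq_minpoly_rat hζ hm0]
    apply minpoly.dvd
    have hkey := key_eval hm0 (mul_one m).symm hζ (show k ≤ m by omega)
    rw [pow_one] at hkey
    have hz : ((X : ℂ[X]) ^ m - 1).coeff (m - k) = 0 := by
      rw [coeff_sub, coeff_X_pow, coeff_one, if_neg (by omega : ¬ m - k = m),
        if_neg (by omega : ¬ m - k = 0), sub_zero]
    rw [hz] at hkey
    have := hkey.symm
    rcases mul_eq_zero.mp this with h | h
    · exact absurd h (pow_ne_zero _ (by norm_num))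
    · exact h
  have hΦg : cyclotomic m ℚ ∣ g := Finset.dvd_gcd hΦS
  -- `Φ_d ∤ g` for proper divisors `d`
  have hnd : ∀ d ∈ (m.divisors.erase 1).erase m, ¬ cyclotomic d ℚ ∣ g := by
    intro d hd hcon
    obtain ⟨hdm, hd1, hddvd, -⟩ : d ≠ m ∧ d ≠ 1 ∧ d ∣ m ∧ m ≠ 0 := by
      simpa [Finset.mem_erase, Nat.mem_divisors, and_assoc] using hd
    have hdpos : 0 < d := Nat.pos_of_dvd_of_pos hddvd hm0
    obtain ⟨r, hr⟩ := hddvd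
    have hrpos : 1 ≤ r := by
      rcases Nat.eq_zero_or_pos r with h | h
      · rw [h, Nat.mul_zero] at hr; omega
      · exact h
    have hdltm : d < m := lt_of_le_of_ne (Nat.le_of_dvd hm0 ⟨r, hr⟩) hdm
    have hξ := Complex.isPrimitiveRoot_exp d (by omega)
    have hgSd : g ∣ S d := Finset.gcd_dvd (Finset.mem_Icc.mpr ⟨hdpos, by omega⟩)
    have hΦSd : cyclotomic d ℚ ∣ S d := hcon.trans hgSd
    have haev : aeval (Complex.exp (2 * Real.pi * Complex.I / d)) (S d) = 0 := by
      obtain ⟨c, hc⟩ := hΦSd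
      rw [hc, map_mul, cyclotomic_eq_minpoly_rat hξ hdpos, minpoly.aeval, zero_mul]
    have hkey := key_eval hdpos hr hξ (le_of_lt hdltm)
    rw [haev, mul_zero] at hkey
    have hco := coeff_lemma hdpos hrpos
    rw [← hr] at hco
    rw [hco] at hkey
    have : (r : ℂ) = 0 := by linear_combination -hkey
    simp only [Nat.cast_eq_zero] at this
    omega
  -- coprimality and conclusion
  have hcop : IsCoprime g (∏ d ∈ (m.divisors.erase 1).erase m, cyclotomic d ℚ) := by
    apply IsCoprime.prod_right
    intro d hd
    have hdpos : 0 < d :=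
      Nat.pos_of_mem_divisors (Finset.mem_of_mem_erase (Finset.mem_of_mem_erase hd))
    exact ((cyclotomic.irreducible_rat hdpos).coprime_iff_not_dvd.mpr (hnd d hd)).symm
  have hS1 : S 1 = ∏ d ∈ m.divisors.erase 1, cyclotomic d ℚ := by
    rw [prod_cyclotomic_eq_geom_sum hm0, hS]
    simp only [Multiset.esymm, Multiset.powersetCard_map, Multiset.powersetCard_one,
      Multiset.map_map]
    simp [Finset.sum, Multiset.map_map]
    exact congrArg Multiset.sum (Multiset.map_congr rfl fun i _ => by simp)
  have hmmem : m ∈ m.divisors.erase 1 :=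
    Finset.mem_erase.mpr ⟨by omega, Nat.mem_divisors_self m (by omega)⟩
  have hgS1 : g ∣ S 1 := Finset.gcd_dvd (Finset.mem_Icc.mpr ⟨le_refl 1, by omega⟩)
  rw [hS1, ← Finset.mul_prod_erase _ _ hmmem] at hgS1
  have hgΦ : g ∣ cyclotomic m ℚ := hcop.dvd_of_dvd_mul_right hgS1
  have hgne : g ≠ 0 := fun h => (cyclotomic_ne_zero m ℚ) (zero_dvd_iff.mp (h ▸ hgΦ))
  have hgmonic : g.Monic := by
    have hnorm : normalize g = g := Finset.normalize_gcd
    rw [← hnorm]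
    exact Polynomial.monic_normalize hgne
  exact Polynomial.eq_of_monic_of_associated hgmonic (cyclotomic.monic m ℚ)
    (associated_of_dvd_dvd hgΦ hΦg)
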